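/- For every integer n ≥ 1, the recurrence coefficients and auxiliary quantities satisfy r_n(t)·(r_n(t) − t) = β_n(t) R_n(t) R_{n−1}(t). -/

import Mathlib

open MeasureTheory Real Filter

/-- The singularly perturbed Laguerre-type weight `w(x;t) = x^λ e^{-x² - t/x}` on `(0,∞)`. -/
noncomputable def weight (lam t x : ℝ) : ℝ := x ^ lam * Real.exp (-x ^ 2 - t / x)

/-- The system of monic orthogonal polynomials with respect to the weight
`w(x;t) = x^λ e^{-x² - t/x}` on `(0,∞)` (for every `t > 0`), together with the
normalization constants `h n t` and the recurrence coefficients `α n t`, `β n t`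
of the three-term recurrence `x Pₙ = Pₙ₊₁ + αₙ Pₙ + βₙ Pₙ₋₁`, `P₀ = 1`, `β₀ P₋₁ = 0`. -/
structure SingLaguerreOPS (lam : ℝ) : Type where
  P : ℕ → ℝ → Polynomial ℝ
  h : ℕ → ℝ → ℝ
  α : ℕ → ℝ → ℝ
  β : ℕ → ℝ → ℝ
  /-- all moments `∫₀^∞ x^k w(x;t) dx`, `k ∈ ℤ`, converge -/
  moments : ∀ (k : ℤ) (t : ℝ), 0 < t →
    IntegrableOn (fun x : ℝ => x ^ k * weight lam t x) (Set.Ioi (0:ℝ))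
  monic : ∀ n t, 0 < t → (P n t).Monic
  natDegree_eq : ∀ n t, 0 < t → (P n t).natDegree = n
  h_pos : ∀ n t, 0 < t → 0 < h n t
  orth : ∀ m n t, 0 < t →
    ∫ x in Set.Ioi (0:ℝ), (P m t).eval x * (P n t).eval x * weight lam t x
      = if m = n then h n t else 0
  P_zero : ∀ t, 0 < t → P 0 t = 1
  recur : ∀ n t, 0 < t →
    Polynomial.X * P n t
      = P (n+1) t + Polynomial.C (α n t) * P n t
        + Polynomial.C (β n t) * (if n = 0 then 0 else P (n-1) t)

/-- The auxiliary quantity `Rₙ(t) = (t/hₙ) ∫₀^∞ y⁻¹ Pₙ(y)² w(y;t) dy`. -/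
noncomputable def Rn (lam : ℝ) (S : SingLaguerreOPS lam) (n : ℕ) (t : ℝ) : ℝ :=
  t / S.h n t * ∫ y in Set.Ioi (0:ℝ), ((S.P n t).eval y) ^ 2 * weight lam t y / y

/-- The auxiliary quantity `rₙ(t) = (t/hₙ₋₁) ∫₀^∞ y⁻¹ Pₙ(y) Pₙ₋₁(y) w(y;t) dy`
(with the convention `P₋₁ = 0`, so `r₀ = 0`). -/
noncomputable def rn (lam : ℝ) (S : SingLaguerreOPS lam) (n : ℕ) (t : ℝ) : ℝ :=
  t / S.h (n-1) t *
    ∫ y in Set.Ioi (0:ℝ),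
      (S.P n t).eval y * (if n = 0 then 0 else (S.P (n-1) t).eval y) * weight lam t y / y

/-- The derivative `v'(z) = 2z - λ/z - t/z²` of the potential `v(z) = z² + t/z - λ ln z`. -/
noncomputable def vprime (lam t z : ℝ) : ℝ := 2 * z - lam / z - t / z ^ 2

section Aux
variable (lam t : ℝ)

lemma int_poly_zpow
    (hm : ∀ k : ℤ, IntegrableOn (fun x : ℝ => x ^ k * weight lam t x) (Set.Ioi 0))
    (p : Polynomial ℝ) (k : ℤ) :
    IntegrableOn (fun x : ℝ => p.eval x * (x ^ k * weight lam t x)) (Set.Ioi 0) := by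
  induction p using Polynomial.induction_on' with
  | add p q hp hq => simpa [add_mul, Pi.add_def] using hp.add hq
  | monomial m a =>
    refine IntegrableOn.congr_fun ((hm ((m : ℤ) + k)).smul a) ?_ measurableSet_Ioi
    intro x hx
    have hx0 : (x : ℝ) ≠ 0 := ne_of_gt hx
    simp only [Polynomial.eval_monomial, Pi.smul_apply, smul_eq_mul, zpow_add₀ hx0,
      zpow_natCast]
    ring

lemma int_poly_mul
    (hm : ∀ k : ℤ, IntegrableOn (fun x : ℝ => x ^ k * weight lam t x) (Set.Ioi 0))
    (p q : Polynomial ℝ) :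
    IntegrableOn (fun x : ℝ => p.eval x * q.eval x * weight lam t x) (Set.Ioi 0) := by
  have := int_poly_zpow lam t hm (p * q) 0
  refine this.congr_fun ?_ measurableSet_Ioi
  intro x _
  simp [mul_assoc]

lemma int_poly_div
    (hm : ∀ k : ℤ, IntegrableOn (fun x : ℝ => x ^ k * weight lam t x) (Set.Ioi 0))
    (p q : Polynomial ℝ) :
    IntegrableOn (fun x : ℝ => p.eval x * q.eval x * weight lam t x / x) (Set.Ioi 0) := by
  have := int_poly_zpow lam t hm (p * q) (-1)
  refine this.congr_fun ?_ measurableSet_Ioi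
  intro x _
  simp only [Polynomial.eval_mul, zpow_neg, zpow_one, div_eq_mul_inv]
  ring
end Aux


section Orth
variable {lam : ℝ} (S : SingLaguerreOPS lam) {t : ℝ}

/-- Orthogonality to polynomials of lower degree. -/
lemma orth_lt (ht : 0 < t) (m : ℕ) (q : Polynomial ℝ) (hq : q.degree < (m : WithBot ℕ)) :
    ∫ x in Set.Ioi (0:ℝ), q.eval x * (S.P m t).eval x * weight lam t x = 0 := by
  have key : ∀ N : ℕ, ∀ q : Polynomial ℝ, q.natDegree ≤ N → q.degree < (m : WithBot ℕ) →
      ∫ x in Set.Ioi (0:ℝ), q.eval x * (S.P m t).eval x * weight lam t x = 0 := by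
    intro N
    induction N with
    | zero =>
      intro q hq hdeg
      rcases eq_or_ne q 0 with rfl | hq0
      · simp
      · have hc : q = Polynomial.C (q.coeff 0) := Polynomial.eq_C_of_natDegree_le_zero hq
        have hm0 : 0 ≠ m := by
          rintro rfl
          rw [Nat.cast_zero, Nat.WithBot.lt_zero_iff] at hdeg
          exact hq0 (Polynomial.degree_eq_bot.mp hdeg)
        have horth := S.orth 0 m t ht
        rw [if_neg hm0] at horth
        rw [hc]
        have hP0 := S.P_zero t ht
        calc ∫ x in Set.Ioi (0:ℝ), (Polynomial.C (q.coeff 0)).eval x * (S.P m t).eval x * weight lam t x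
            = ∫ x in Set.Ioi (0:ℝ), (q.coeff 0) * ((S.P 0 t).eval x * (S.P m t).eval x * weight lam t x) := by
              apply setIntegral_congr_fun measurableSet_Ioi
              intro x _
              simp [hP0]
              ring
          _ = (q.coeff 0) * ∫ x in Set.Ioi (0:ℝ), (S.P 0 t).eval x * (S.P m t).eval x * weight lam t x :=
              integral_const_mul _ _
          _ = 0 := by rw [horth, mul_zero]
    | succ N ih =>
      intro q hq hdeg
      rcases le_or_gt q.natDegree N with hle | hlt
      · exact ih q hle hdeg
      have hd : q.natDegree = N + 1 := le_antisymm hq hlt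
      have hq0 : q ≠ 0 := by
        intro h0; rw [h0] at hd; simp at hd
      set c := q.leadingCoeff with hc
      have hc0 : c ≠ 0 := Polynomial.leadingCoeff_ne_zero.mpr hq0
      set r := q - Polynomial.C c * S.P (N+1) t with hr
      have hmonic := S.monic (N+1) t ht
      have hPdeg := S.natDegree_eq (N+1) t ht
      have hdegP : (S.P (N+1) t).degree = ((N+1 : ℕ) : WithBot ℕ) := by
        rw [Polynomial.degree_eq_natDegree hmonic.ne_zero, hPdeg]
      have hdegq : q.degree = ((N+1 : ℕ) : WithBot ℕ) := by
        rw [Polynomial.degree_eq_natDegree hq0, hd]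
      have hrdeg : r.degree < ((N+1 : ℕ) : WithBot ℕ) := by
        rw [hr, ← hdegq]
        apply Polynomial.degree_sub_lt
        · rw [hdegq, Polynomial.degree_mul, Polynomial.degree_C hc0, hdegP, zero_add]
        · exact hq0
        · rw [Polynomial.leadingCoeff_mul, Polynomial.leadingCoeff_C, hmonic.leadingCoeff, mul_one]
      have hrnat : r.natDegree ≤ N := by
        rcases eq_or_ne r 0 with h0 | h0
        · simp [h0]
        · have h2 : ((r.natDegree : ℕ) : WithBot ℕ) < ((N+1 : ℕ) : WithBot ℕ) :=
            Polynomial.degree_eq_natDegree h0 ▸ hrdeg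
          exact Nat.lt_succ_iff.mp (by exact_mod_cast h2)
      have hsplit : q = Polynomial.C c * S.P (N+1) t + r := by rw [hr]; ring
      have hNlt : ((N+1 : ℕ) : WithBot ℕ) < (m : WithBot ℕ) := hdegq ▸ hdeg
      have hNm : N + 1 ≠ m := by
        intro h; rw [h] at hNlt; exact lt_irrefl _ hNlt
      have horth := S.orth (N+1) m t ht
      rw [if_neg hNm] at horth
      have hi1 : IntegrableOn (fun x : ℝ => (Polynomial.C c * S.P (N+1) t).eval x * (S.P m t).eval x * weight lam t x) (Set.Ioi 0) :=
        int_poly_mul lam t (fun k => S.moments k t ht) _ _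
      have hi2 : IntegrableOn (fun x : ℝ => r.eval x * (S.P m t).eval x * weight lam t x) (Set.Ioi 0) :=
        int_poly_mul lam t (fun k => S.moments k t ht) _ _
      calc ∫ x in Set.Ioi (0:ℝ), q.eval x * (S.P m t).eval x * weight lam t x
          = ∫ x in Set.Ioi (0:ℝ), ((Polynomial.C c * S.P (N+1) t).eval x * (S.P m t).eval x * weight lam t x
              + r.eval x * (S.P m t).eval x * weight lam t x) := by
            apply setIntegral_congr_fun measurableSet_Ioi
            intro x _
            conv_lhs => rw [hsplit]
            simp
            ring
        _ = (∫ x in Set.Ioi (0:ℝ), (Polynomial.C c * S.P (N+1) t).eval x * (S.P m t).eval x * weight lam t x)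
            + ∫ x in Set.Ioi (0:ℝ), r.eval x * (S.P m t).eval x * weight lam t x :=
            integral_add hi1 hi2
        _ = 0 := by
            rw [ih r hrnat (lt_trans hrdeg hNlt)]
            have heq : ∫ x in Set.Ioi (0:ℝ), (Polynomial.C c * S.P (N+1) t).eval x * (S.P m t).eval x * weight lam t x
                = c * ∫ x in Set.Ioi (0:ℝ), (S.P (N+1) t).eval x * (S.P m t).eval x * weight lam t x := by
              rw [← integral_const_mul]
              apply setIntegral_congr_fun measurableSet_Ioi
              intro x _
              simp
              ring
            rw [heq, horth, mul_zero, add_zero]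
  exact key q.natDegree q le_rfl hq


/-- Integral against `P m` extracts the degree-`m` coefficient. -/
lemma int_eq_coeff (ht : 0 < t) (m : ℕ) (q : Polynomial ℝ) (hq : q.natDegree ≤ m) :
    ∫ x in Set.Ioi (0:ℝ), q.eval x * (S.P m t).eval x * weight lam t x
      = q.coeff m * S.h m t := by
  set c := q.coeff m with hc
  set r := q - Polynomial.C c * S.P m t with hr
  have hmonic := S.monic m t ht
  have hPdeg := S.natDegree_eq m t ht
  have hrdeg : r.degree < (m : WithBot ℕ) := by
    rw [Polynomial.degree_lt_iff_coeff_zero]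
    intro k hk
    rcases eq_or_lt_of_le hk with heq | hlt
    · have hkm : m = k := by exact_mod_cast heq
      have h1 : (S.P m t).coeff k = 1 := by
        have h2 := hmonic.leadingCoeff
        rw [Polynomial.leadingCoeff, hPdeg] at h2
        rw [← hkm]; exact h2
      rw [hr, Polynomial.coeff_sub, Polynomial.coeff_C_mul, h1, mul_one, ← hkm]
      simp [hc]
    · have hkm : (m : ℕ) < k := by exact_mod_cast hlt
      have h1 : q.coeff k = 0 := Polynomial.coeff_eq_zero_of_natDegree_lt (lt_of_le_of_lt hq hkm)
      have h2 : (S.P m t).coeff k = 0 :=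
        Polynomial.coeff_eq_zero_of_natDegree_lt (by rw [hPdeg]; exact hkm)
      simp [hr, Polynomial.coeff_C_mul, h1, h2]
  have hsplit : q = Polynomial.C c * S.P m t + r := by rw [hr]; ring
  have horth := S.orth m m t ht
  rw [if_pos rfl] at horth
  have hi1 : IntegrableOn (fun x : ℝ => (Polynomial.C c * S.P m t).eval x * (S.P m t).eval x * weight lam t x) (Set.Ioi 0) :=
    int_poly_mul lam t (fun k => S.moments k t ht) _ _
  have hi2 : IntegrableOn (fun x : ℝ => r.eval x * (S.P m t).eval x * weight lam t x) (Set.Ioi 0) :=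
    int_poly_mul lam t (fun k => S.moments k t ht) _ _
  calc ∫ x in Set.Ioi (0:ℝ), q.eval x * (S.P m t).eval x * weight lam t x
      = ∫ x in Set.Ioi (0:ℝ), ((Polynomial.C c * S.P m t).eval x * (S.P m t).eval x * weight lam t x
          + r.eval x * (S.P m t).eval x * weight lam t x) := by
        apply setIntegral_congr_fun measurableSet_Ioi
        intro x _
        conv_lhs => rw [hsplit]
        simp
        ring
    _ = (∫ x in Set.Ioi (0:ℝ), (Polynomial.C c * S.P m t).eval x * (S.P m t).eval x * weight lam t x)
        + ∫ x in Set.Ioi (0:ℝ), r.eval x * (S.P m t).eval x * weight lam t x :=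
        integral_add hi1 hi2
    _ = c * S.h m t := by
        rw [orth_lt S ht m r hrdeg, add_zero]
        have heq : ∫ x in Set.Ioi (0:ℝ), (Polynomial.C c * S.P m t).eval x * (S.P m t).eval x * weight lam t x
            = c * ∫ x in Set.Ioi (0:ℝ), (S.P m t).eval x * (S.P m t).eval x * weight lam t x := by
          rw [← integral_const_mul]
          apply setIntegral_congr_fun measurableSet_Ioi
          intro x _
          simp
          ring
        rw [heq, horth]

/-- `βₙ hₙ₋₁ = hₙ` for `n ≥ 1`. -/
lemma beta_h (ht : 0 < t) (n : ℕ) (hn : 1 ≤ n) :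
    S.β n t * S.h (n-1) t = S.h n t := by
  have hn0 : n ≠ 0 := Nat.one_le_iff_ne_zero.mp hn
  have hrec := S.recur n t ht
  rw [if_neg hn0] at hrec
  have hmB := fun k => S.moments k t ht
  -- Compute A := ∫ x Pₙ Pₙ₋₁ w in two ways.
  -- Way 1: via the recurrence.
  have h1 : ∫ x in Set.Ioi (0:ℝ), (Polynomial.X * S.P n t).eval x * (S.P (n-1) t).eval x * weight lam t x
      = S.β n t * S.h (n-1) t := by
    have e1 := S.orth (n+1) (n-1) t ht
    have e2 := S.orth n (n-1) t ht
    have e3 := S.orth (n-1) (n-1) t ht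
    rw [if_neg (by omega)] at e1
    rw [if_neg (by omega)] at e2
    rw [if_pos rfl] at e3
    have hi1 : IntegrableOn (fun x : ℝ => (S.P (n+1) t).eval x * (S.P (n-1) t).eval x * weight lam t x) (Set.Ioi 0) :=
      int_poly_mul lam t hmB _ _
    have hi2 : IntegrableOn (fun x : ℝ => (Polynomial.C (S.α n t) * S.P n t).eval x * (S.P (n-1) t).eval x * weight lam t x) (Set.Ioi 0) :=
      int_poly_mul lam t hmB _ _
    have hi3 : IntegrableOn (fun x : ℝ => (Polynomial.C (S.β n t) * S.P (n-1) t).eval x * (S.P (n-1) t).eval x * weight lam t x) (Set.Ioi 0) :=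
      int_poly_mul lam t hmB _ _
    calc ∫ x in Set.Ioi (0:ℝ), (Polynomial.X * S.P n t).eval x * (S.P (n-1) t).eval x * weight lam t x
        = ∫ x in Set.Ioi (0:ℝ), ((S.P (n+1) t).eval x * (S.P (n-1) t).eval x * weight lam t x
            + (Polynomial.C (S.α n t) * S.P n t).eval x * (S.P (n-1) t).eval x * weight lam t x
            + (Polynomial.C (S.β n t) * S.P (n-1) t).eval x * (S.P (n-1) t).eval x * weight lam t x) := by
          apply setIntegral_congr_fun measurableSet_Ioi
          intro x _
          rw [hrec]
          simp
          ring
      _ = (∫ x in Set.Ioi (0:ℝ), (S.P (n+1) t).eval x * (S.P (n-1) t).eval x * weight lam t x)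
          + (∫ x in Set.Ioi (0:ℝ), (Polynomial.C (S.α n t) * S.P n t).eval x * (S.P (n-1) t).eval x * weight lam t x)
          + ∫ x in Set.Ioi (0:ℝ), (Polynomial.C (S.β n t) * S.P (n-1) t).eval x * (S.P (n-1) t).eval x * weight lam t x := by
          rw [show (∫ x in Set.Ioi (0:ℝ), ((S.P (n+1) t).eval x * (S.P (n-1) t).eval x * weight lam t x
            + (Polynomial.C (S.α n t) * S.P n t).eval x * (S.P (n-1) t).eval x * weight lam t x
            + (Polynomial.C (S.β n t) * S.P (n-1) t).eval x * (S.P (n-1) t).eval x * weight lam t x))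
            = (∫ x in Set.Ioi (0:ℝ), ((S.P (n+1) t).eval x * (S.P (n-1) t).eval x * weight lam t x
            + (Polynomial.C (S.α n t) * S.P n t).eval x * (S.P (n-1) t).eval x * weight lam t x))
            + ∫ x in Set.Ioi (0:ℝ), (Polynomial.C (S.β n t) * S.P (n-1) t).eval x * (S.P (n-1) t).eval x * weight lam t x
            from integral_add (hi1.add hi2) hi3, integral_add hi1 hi2]
      _ = S.β n t * S.h (n-1) t := by
          have hA : ∫ x in Set.Ioi (0:ℝ), (Polynomial.C (S.α n t) * S.P n t).eval x * (S.P (n-1) t).eval x * weight lam t x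
              = S.α n t * ∫ x in Set.Ioi (0:ℝ), (S.P n t).eval x * (S.P (n-1) t).eval x * weight lam t x := by
            rw [← integral_const_mul]
            apply setIntegral_congr_fun measurableSet_Ioi
            intro x _; simp; ring
          have hB : ∫ x in Set.Ioi (0:ℝ), (Polynomial.C (S.β n t) * S.P (n-1) t).eval x * (S.P (n-1) t).eval x * weight lam t x
              = S.β n t * ∫ x in Set.Ioi (0:ℝ), (S.P (n-1) t).eval x * (S.P (n-1) t).eval x * weight lam t x := by
            rw [← integral_const_mul]
            apply setIntegral_congr_fun measurableSet_Ioi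
            intro x _; simp; ring
          rw [hA, hB, e1, e2, e3]
          ring
  -- Way 2: via `int_eq_coeff` with `q = X * Pₙ₋₁`.
  have h2 : ∫ x in Set.Ioi (0:ℝ), (Polynomial.X * S.P n t).eval x * (S.P (n-1) t).eval x * weight lam t x
      = S.h n t := by
    have hP1 := S.monic (n-1) t ht
    have hd1 := S.natDegree_eq (n-1) t ht
    have hdeg : (Polynomial.X * S.P (n-1) t).natDegree ≤ n := by
      rw [Polynomial.natDegree_mul Polynomial.X_ne_zero hP1.ne_zero,
        Polynomial.natDegree_X, hd1]
      omega
    have hcoeff : (Polynomial.X * S.P (n-1) t).coeff n = 1 := by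
      have hne : n = (n-1) + 1 := by omega
      rw [hne, Polynomial.coeff_X_mul]
      have := hP1.leadingCoeff
      rwa [Polynomial.leadingCoeff, hd1] at this
    have := int_eq_coeff S ht n (Polynomial.X * S.P (n-1) t) hdeg
    rw [hcoeff, one_mul] at this
    rw [← this]
    apply setIntegral_congr_fun measurableSet_Ioi
    intro x _
    simp only [Polynomial.eval_mul, Polynomial.eval_X]
    ring
  rw [← h1, h2]

end Orth

section Main
variable {lam : ℝ} (S : SingLaguerreOPS lam) {t : ℝ}

lemma int_div_one {lam t : ℝ}
    (hm : ∀ k : ℤ, IntegrableOn (fun x : ℝ => x ^ k * weight lam t x) (Set.Ioi 0))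
    (q : Polynomial ℝ) :
    IntegrableOn (fun x : ℝ => q.eval x * weight lam t x / x) (Set.Ioi 0) := by
  refine (int_poly_div lam t hm q 1).congr_fun ?_ measurableSet_Ioi
  intro x _
  simp

lemma J_split {lam t : ℝ}
    (hm : ∀ k : ℤ, IntegrableOn (fun x : ℝ => x ^ k * weight lam t x) (Set.Ioi 0))
    (p q : Polynomial ℝ) :
    ∫ y in Set.Ioi (0:ℝ), p.eval y * q.eval y * weight lam t y / y
      = (∫ y in Set.Ioi (0:ℝ), (p.divX).eval y * q.eval y * weight lam t y)
        + p.coeff 0 * ∫ y in Set.Ioi (0:ℝ), q.eval y * weight lam t y / y := by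
  have hiA : IntegrableOn (fun y : ℝ => (p.divX).eval y * q.eval y * weight lam t y) (Set.Ioi 0) :=
    int_poly_mul lam t hm _ _
  have hiB : IntegrableOn (fun y : ℝ => p.coeff 0 * (q.eval y * weight lam t y / y)) (Set.Ioi 0) :=
    (int_div_one hm q).const_mul _
  calc ∫ y in Set.Ioi (0:ℝ), p.eval y * q.eval y * weight lam t y / y
      = ∫ y in Set.Ioi (0:ℝ), ((p.divX).eval y * q.eval y * weight lam t y
          + p.coeff 0 * (q.eval y * weight lam t y / y)) := by
        apply setIntegral_congr_fun measurableSet_Ioi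
        intro y hy
        have hy0 : y ≠ 0 := ne_of_gt hy
        have hev : p.eval y = (p.divX).eval y * y + p.coeff 0 := by
          conv_lhs => rw [← Polynomial.divX_mul_X_add p]
          simp
        simp only []
        rw [hev]
        field_simp
    _ = (∫ y in Set.Ioi (0:ℝ), (p.divX).eval y * q.eval y * weight lam t y)
        + ∫ y in Set.Ioi (0:ℝ), p.coeff 0 * (q.eval y * weight lam t y / y) :=
        integral_add hiA hiB
    _ = _ := by rw [integral_const_mul]

lemma divX_degree_lt (ht : 0 < t) (k : ℕ) :
    (S.P k t).divX.degree < (k : WithBot ℕ) := by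
  rcases Nat.eq_zero_or_pos k with rfl | hk
  · have h0 := S.P_zero t ht
    rw [h0]
    have : (1 : Polynomial ℝ).divX = 0 := by
      rw [show (1 : Polynomial ℝ) = Polynomial.C 1 from (map_one _).symm, Polynomial.divX_C]
    rw [this, Polynomial.degree_zero]
    exact WithBot.bot_lt_coe _
  · have hnd : (S.P k t).divX.natDegree = k - 1 := by
      rw [Polynomial.natDegree_divX_eq_natDegree_tsub_one, S.natDegree_eq k t ht]
    calc (S.P k t).divX.degree ≤ ((S.P k t).divX.natDegree : WithBot ℕ) :=
          Polynomial.degree_le_natDegree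
      _ < (k : WithBot ℕ) := by
          rw [hnd]
          exact_mod_cast Nat.sub_lt hk Nat.one_pos

end Main


theorem statement7 (lam t : ℝ) (hlam : 0 ≤ lam) (ht : 0 < t)
    (S : SingLaguerreOPS lam) (n : ℕ) (hn : 1 ≤ n) :
    rn lam S n t * (rn lam S n t - t)
      = S.β n t * Rn lam S n t * Rn lam S (n-1) t := by
  have hn0 : n ≠ 0 := Nat.one_le_iff_ne_zero.mp hn
  have hmB := fun k => S.moments k t ht
  set a := (S.P n t).coeff 0 with ha
  set b := (S.P (n-1) t).coeff 0 with hb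
  set cn := ∫ y in Set.Ioi (0:ℝ), (S.P n t).eval y * weight lam t y / y with hcn
  set cm := ∫ y in Set.Ioi (0:ℝ), (S.P (n-1) t).eval y * weight lam t y / y with hcm
  set H := S.h (n-1) t with hH
  set Hn := S.h n t with hHn
  have hHne : H ≠ 0 := ne_of_gt (S.h_pos (n-1) t ht)
  have hHnne : Hn ≠ 0 := ne_of_gt (S.h_pos n t ht)
  have hbeta : S.β n t * H = Hn := beta_h S ht n hn
  have hbne : S.β n t ≠ 0 := by
    intro h0
    rw [h0, zero_mul] at hbeta
    exact hHnne hbeta.symm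
  -- F1 : ∫ Pₙ Pₙ₋₁ w / y = H + a * cm
  have F1 : ∫ y in Set.Ioi (0:ℝ), (S.P n t).eval y * (S.P (n-1) t).eval y * weight lam t y / y
      = H + a * cm := by
    rw [J_split hmB]
    congr 1
    have hdeg : (S.P n t).divX.natDegree ≤ n - 1 := by
      rw [Polynomial.natDegree_divX_eq_natDegree_tsub_one, S.natDegree_eq n t ht]
    have hco : (S.P n t).divX.coeff (n-1) = 1 := by
      rw [Polynomial.coeff_divX, show n - 1 + 1 = n by omega]
      have h2 := (S.monic n t ht).leadingCoeff
      rwa [Polynomial.leadingCoeff, S.natDegree_eq n t ht] at h2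
    rw [int_eq_coeff S ht (n-1) _ hdeg, hco, one_mul]
  -- F2 : ∫ Pₙ₋₁ Pₙ w / y = b * cn
  have F2 : ∫ y in Set.Ioi (0:ℝ), (S.P (n-1) t).eval y * (S.P n t).eval y * weight lam t y / y
      = b * cn := by
    rw [J_split hmB]
    rw [orth_lt S ht n _ (lt_of_lt_of_le (divX_degree_lt S ht (n-1))
      (by exact_mod_cast Nat.sub_le n 1)), zero_add]
  -- F3 : ∫ Pₙ² w / y = a * cn
  have F3 : ∫ y in Set.Ioi (0:ℝ), (S.P n t).eval y * (S.P n t).eval y * weight lam t y / y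
      = a * cn := by
    rw [J_split hmB, orth_lt S ht n _ (divX_degree_lt S ht n), zero_add]
  -- F4 : ∫ Pₙ₋₁² w / y = b * cm
  have F4 : ∫ y in Set.Ioi (0:ℝ), (S.P (n-1) t).eval y * (S.P (n-1) t).eval y * weight lam t y / y
      = b * cm := by
    rw [J_split hmB, orth_lt S ht (n-1) _ (divX_degree_lt S ht (n-1)), zero_add]
  -- expressions for rn and Rn
  have e_rn : rn lam S n t = t / H * (H + a * cm) := by
    rw [rn, ← hH, ← F1]
    congr 1
    apply setIntegral_congr_fun measurableSet_Ioi
    intro y _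
    simp only [if_neg hn0]
  have e_rn' : rn lam S n t = t / H * (b * cn) := by
    rw [rn, ← hH, ← F2]
    congr 1
    apply setIntegral_congr_fun measurableSet_Ioi
    intro y _
    simp only [if_neg hn0]
    ring
  have e_Rn : Rn lam S n t = t / Hn * (a * cn) := by
    rw [Rn, ← hHn, ← F3]
    congr 1
    apply setIntegral_congr_fun measurableSet_Ioi
    intro y _
    ring
  have e_Rm : Rn lam S (n-1) t = t / H * (b * cm) := by
    rw [Rn, ← hH, ← F4]
    congr 1
    apply setIntegral_congr_fun measurableSet_Ioi
    intro y _
    ring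
  have h5 : rn lam S n t - t = t / H * (a * cm) := by
    rw [e_rn]
    field_simp
    ring
  rw [h5, e_rn', e_Rn, e_Rm, ← hbeta]
  field_simp
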